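/- Any solution returned by the prioritized planning algorithm PP—which plans agents' paths one by one, each new path avoiding all other agents' goal vertices and avoiding every edge (u,v) such that some stored fragment ends at u and starts from v—is a feasible OTIMAPP solution. -/

import Mathlib

open scoped Classical

/-- An OTIMAPP path set: `n` agents, agent `i` follows the path
`loc i 0, loc i 1, ..., loc i (L i)`; `loc i 0` is its start and `loc i (L i)` its goal. -/
structure OTI (V : Type) (n : ℕ) where
  L : Fin n → ℕ
  loc : Fin n → ℕ → V

namespace OTI

variable {V : Type} {n : ℕ}

/-- Activation of agent `i` in configuration `c` (clocks): the agent advances iff it is not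
at the end of its path and its next vertex is unoccupied. -/
noncomputable def step (P : OTI V n) (c : Fin n → ℕ) (i : Fin n) : Fin n → ℕ :=
  if c i < P.L i ∧ ∀ j, j ≠ i → P.loc j (c j) ≠ P.loc i (c i + 1)
  then Function.update c i (c i + 1) else c

/-- Configuration after the first `k` activations of execution `e`. -/
noncomputable def run (P : OTI V n) (e : ℕ → Fin n) : ℕ → Fin n → ℕ
  | 0 => fun _ => 0
  | k + 1 => P.step (P.run e k) (e k)

/-- An execution is fair when every agent is activated infinitely often. -/
def Fair (e : ℕ → Fin n) : Prop := ∀ (i : Fin n) (k : ℕ), ∃ m, k ≤ m ∧ e m = i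

/-- All agents reach their goals after finitely many activations. -/
def Terminates (P : OTI V n) (e : ℕ → Fin n) : Prop :=
  ∃ k, ∀ i, P.run e k i = P.L i

/-- A feasible OTIMAPP solution: every fair execution terminates. -/
def Feasible (P : OTI V n) : Prop := ∀ e, Fair e → P.Terminates e

/-- A configuration (assignment of clocks) is reachable by some execution. -/
def Reachable (P : OTI V n) (c : Fin n → ℕ) : Prop := ∃ e k, P.run e k = c

/-- A potential cyclic deadlock: distinct agents `σ 0, …, σ k` with clock values `t`
such that each agent's next vertex is the next agent's current vertex, cyclically. -/
def PotentialCyclic (P : OTI V n) {k : ℕ} (σ : Fin (k + 1) → Fin n)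
    (t : Fin (k + 1) → ℕ) : Prop :=
  Function.Injective σ ∧ (∀ m, t m < P.L (σ m)) ∧
    ∀ m, P.loc (σ m) (t m + 1) = P.loc (σ (m + 1)) (t (m + 1))

/-- A reachable cyclic deadlock: a potential cyclic deadlock whose clock values are realized
by some reachable configuration. -/
def ReachableCyclic (P : OTI V n) {k : ℕ} (σ : Fin (k + 1) → Fin n)
    (t : Fin (k + 1) → ℕ) : Prop :=
  P.PotentialCyclic σ t ∧ ∃ c, P.Reachable c ∧ ∀ m, c (σ m) = t m

/-- A potential terminal deadlock `(i, j, tj)`: agent `i`'s goal lies on `j`'s path. -/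
def PotentialTerminal (P : OTI V n) (i j : Fin n) (tj : ℕ) : Prop :=
  i ≠ j ∧ tj ≤ P.L j ∧ P.loc i (P.L i) = P.loc j tj

/-- A reachable terminal deadlock: some execution puts `i` at its goal and `j` at clock `tj - 1`. -/
def ReachableTerminal (P : OTI V n) (i j : Fin n) (tj : ℕ) : Prop :=
  P.PotentialTerminal i j tj ∧ ∃ c, P.Reachable c ∧ c i = P.L i ∧ c j + 1 = tj

/-- The path set is a set of paths on graph `G` with starts `s` and goals `g`. -/
def OnGraph (P : OTI V n) (G : SimpleGraph V) (s g : Fin n → V) : Prop :=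
  (∀ i, P.loc i 0 = s i) ∧ (∀ i, P.loc i (P.L i) = g i) ∧
    ∀ i t, t < P.L i → G.Adj (P.loc i t) (P.loc i (t + 1))

/-- A fragment: a nonempty chain of (agent, clock) pairs with distinct agents, where each
agent's next vertex equals the next agent's current vertex. -/
def IsFragment (P : OTI V n) (l : List (Fin n × ℕ)) : Prop :=
  l ≠ [] ∧ (l.map Prod.fst).Nodup ∧ (∀ p ∈ l, p.2 < P.L p.1) ∧
    l.Chain' fun p q => P.loc p.1 (p.2 + 1) = P.loc q.1 q.2

/-- The vertex a fragment starts from. -/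
def fragStart (P : OTI V n) (l : List (Fin n × ℕ)) : Option V :=
  l.head?.map fun p => P.loc p.1 p.2

/-- The vertex a fragment ends at. -/
def fragEnd (P : OTI V n) (l : List (Fin n × ℕ)) : Option V :=
  l.getLast?.map fun p => P.loc p.1 (p.2 + 1)

end OTI

section PPAux
variable {V : Type} {n : ℕ}

lemma pp_step_le (P : OTI V n) (c : Fin n → ℕ) (i j : Fin n) (h : c j ≤ P.L j) :
    P.step c i j ≤ P.L j := by
  unfold OTI.step
  split
  · rename_i hc
    rcases eq_or_ne j i with rfl | hne
    · simp only [Function.update_self]; omega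
    · simpa [Function.update_of_ne hne] using h
  · exact h

lemma pp_le_step (P : OTI V n) (c : Fin n → ℕ) (i j : Fin n) :
    c j ≤ P.step c i j := by
  unfold OTI.step
  split
  · rcases eq_or_ne j i with rfl | hne
    · simp only [Function.update_self]; omega
    · simp [Function.update_of_ne hne]
  · exact le_refl _

lemma pp_run_le (P : OTI V n) (e : ℕ → Fin n) : ∀ k i, P.run e k i ≤ P.L i := by
  intro k
  induction k with
  | zero => intro i; simp [OTI.run]
  | succ k ih => intro i; exact pp_step_le P _ _ _ (ih i)

lemma pp_run_mono (P : OTI V n) (e : ℕ → Fin n) (k : ℕ) (i : Fin n) :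
    P.run e k i ≤ P.run e (k + 1) i :=
  pp_le_step P _ _ _

lemma pp_exists_stable (P : OTI V n) (e : ℕ → Fin n) :
    ∃ K, ∀ m, K ≤ m → P.run e m = P.run e K := by
  set S : ℕ → ℕ := fun k => ∑ i, P.run e k i with hS
  have hbdd : BddAbove (Set.range S) := by
    refine ⟨∑ i, P.L i, ?_⟩
    rintro _ ⟨k, rfl⟩
    exact Finset.sum_le_sum fun i _ => pp_run_le P e k i
  obtain ⟨K, hK⟩ := Nat.sSup_mem (Set.range_nonempty S) hbdd
  refine ⟨K, ?_⟩
  intro m hm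
  induction m with
  | zero =>
    have : K = 0 := by omega
    rw [this]
  | succ m ih =>
    rcases Nat.lt_or_ge K (m + 1) with h | h
    · have heq : P.run e m = P.run e K := ih (by omega)
      have hle : ∀ i ∈ Finset.univ, P.run e K i ≤ P.run e (m + 1) i := by
        intro i _
        rw [← heq]; exact pp_run_mono P e m i
      have hsum : S (m + 1) ≤ S K := by
        rw [hK]; exact le_csSup hbdd ⟨m + 1, rfl⟩
      have hsum' : S K = S (m + 1) := le_antisymm (Finset.sum_le_sum hle) hsum
      have := (Finset.sum_eq_sum_iff_of_le hle).mp hsum'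
      funext i
      exact (this i (Finset.mem_univ i)).symm
    · have : K = m + 1 := by omega
      rw [this]

end PPAux

/-- correctness of PP: if each agent's path avoids all other agents' goals
(except possibly at its start) and, for every edge `(π_i[j], π_i[j+1])`, no fragment of the
previously planned paths (agents of smaller index) ends at `π_i[j]` and starts from
`π_i[j+1]`, then the path set is a feasible OTIMAPP solution. -/
theorem pp_correct {V : Type} {n : ℕ} (P : OTI V n)
    (hs : Function.Injective fun i => P.loc i 0)
    (hg : Function.Injective fun i => P.loc i (P.L i))
    (h1 : ∀ i j : Fin n, i ≠ j → ∀ t, t ≤ P.L i →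
      P.loc i t = P.loc j (P.L j) → t = 0)
    (h2 : ∀ (i : Fin n) (j : ℕ), j < P.L i →
      ¬ ∃ l, P.IsFragment l ∧ (∀ p ∈ l, p.1 < i) ∧
        P.fragEnd l = some (P.loc i j) ∧ P.fragStart l = some (P.loc i (j + 1))) :
    P.Feasible := by
  intro e he
  by_contra hterm
  obtain ⟨K, hK⟩ := pp_exists_stable P e
  set c : Fin n → ℕ := P.run e K with hcdef
  simp only [OTI.Terminates, not_exists, not_forall] at hterm
  obtain ⟨i0, hi0⟩ := hterm K
  have hi0' : c i0 < P.L i0 := lt_of_le_of_ne (pp_run_le P e K i0) hi0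
  -- every stuck agent has a blocker, itself stuck
  have hblk : ∀ i, c i < P.L i →
      ∃ j, j ≠ i ∧ c j < P.L j ∧ P.loc j (c j) = P.loc i (c i + 1) := by
    intro i hi
    obtain ⟨m, hm, hem⟩ := he i K
    have h1m : P.run e m = c := hK m hm
    have h2m : P.run e (m + 1) = c := hK (m + 1) (by omega)
    have hstepc : P.step c (e m) = c := by
      have hrw : P.run e (m + 1) = P.step (P.run e m) (e m) := rfl
      rw [h1m] at hrw
      rw [← hrw, h2m]
    rw [hem] at hstepc
    by_cases hcond : c i < P.L i ∧ ∀ j, j ≠ i → P.loc j (c j) ≠ P.loc i (c i + 1)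
    · exfalso
      have hci := congrFun hstepc i
      rw [OTI.step, if_pos hcond] at hci
      simp only [Function.update_self] at hci
      omega
    · push_neg at hcond
      obtain ⟨j, hji, hj⟩ := hcond hi
      refine ⟨j, hji, ?_, hj⟩
      rcases lt_or_eq_of_le (pp_run_le P e K j) with h | h
      · exact h
      · exfalso
        have hgoal : P.loc i (c i + 1) = P.loc j (P.L j) := by
          rw [← hj]
          exact congrArg (P.loc j) h
        have := h1 i j (Ne.symm hji) (c i + 1) hi hgoal
        omega
  -- blocker function
  let f : Fin n → Fin n := fun i => if h : c i < P.L i then (hblk i h).choose else i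
  have hf : ∀ i (h : c i < P.L i),
      f i ≠ i ∧ c (f i) < P.L (f i) ∧ P.loc (f i) (c (f i)) = P.loc i (c i + 1) := by
    intro i h
    simp only [f, dif_pos h]
    exact (hblk i h).choose_spec
  -- iterate
  let x : ℕ → Fin n := fun m => f^[m] i0
  have hxs : ∀ m, x (m + 1) = f (x m) := fun m => Function.iterate_succ_apply' f m i0
  have hxB : ∀ m, c (x m) < P.L (x m) := by
    intro m
    induction m with
    | zero => exact hi0'
    | succ m ih =>
      rw [hxs m]
      exact (hf _ ih).2.1
  have hxne : ∀ m, x (m + 1) ≠ x m := by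
    intro m
    rw [hxs m]
    exact (hf _ (hxB m)).1
  -- pigeonhole and least repeat
  have hQ : ∃ b, ∃ a, a < b ∧ x a = x b := by
    obtain ⟨p, q, hpq, hxeq⟩ := Finite.exists_ne_map_eq_of_infinite x
    rcases hpq.lt_or_gt with h | h
    · exact ⟨q, p, h, hxeq⟩
    · exact ⟨p, q, h, hxeq.symm⟩
  set b := Nat.find hQ with hbdef
  obtain ⟨a, hab, hxab⟩ := Nat.find_spec hQ
  rw [← hbdef] at hab hxab
  have hdist : ∀ p q, p < q → q < b → x p ≠ x q := by
    intro p q hpq hqb hne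
    exact Nat.find_min hQ hqb ⟨p, hpq, hne⟩
  set k := b - a with hkdef
  have hk2 : 2 ≤ k := by
    rcases Nat.lt_or_ge b (a + 2) with h | h
    · exfalso
      have hba : b = a + 1 := by omega
      apply hxne a
      rw [← hba, ← hxab]
    · omega
  have hk0 : 0 < k := by omega
  have hb : b = a + k := by omega
  -- cyclic sequence
  set z : ℕ → Fin n := fun m => x (a + m % k) with hzdef
  have hzper : ∀ m, z (m + k) = z m := by
    intro m
    simp only [z, Nat.add_mod_right]
  have hzmod : ∀ m, z m = z (m % k) := by
    intro m
    simp only [z, Nat.mod_mod_of_dvd m dvd_rfl]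
  have hzs : ∀ m, z (m + 1) = f (z m) := by
    intro m
    have hmk : m % k < k := Nat.mod_lt _ hk0
    have h1k : 1 % k = 1 := Nat.mod_eq_of_lt (by omega)
    rcases eq_or_lt_of_le (Nat.succ_le_of_lt hmk) with h | h
    · -- m % k + 1 = k
      have h' : m % k + 1 = k := h
      have hmod : (m + 1) % k = 0 := by
        rw [Nat.add_mod, h1k, h', Nat.mod_self]
      show x (a + (m + 1) % k) = f (x (a + m % k))
      rw [hmod, Nat.add_zero, hxab, hb, show a + k = (a + m % k) + 1 by omega, hxs]
    · have hmod : (m + 1) % k = m % k + 1 := by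
        rw [Nat.add_mod, h1k, Nat.mod_eq_of_lt h]
      show x (a + (m + 1) % k) = f (x (a + m % k))
      rw [hmod, show a + (m % k + 1) = (a + m % k) + 1 by omega, hxs]
  have hzB : ∀ m, c (z m) < P.L (z m) := fun m => hxB _
  have hzchain : ∀ m, P.loc (z (m + 1)) (c (z (m + 1))) = P.loc (z m) (c (z m) + 1) := by
    intro m
    rw [hzs m]
    exact (hf _ (hzB m)).2.2
  have hzinj : ∀ p q, p ≤ q → q < p + k → z p = z q → p = q := by
    intro p q hpq hlt heq
    have hmq : q % k < k := Nat.mod_lt _ hk0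
    have hmp : p % k < k := Nat.mod_lt _ hk0
    have h1 : p % k = q % k := by
      by_contra hne
      rcases Nat.lt_or_ge (p % k) (q % k) with h | h
      · exact hdist (a + p % k) (a + q % k) (by omega) (by omega) heq
      · have h' : q % k < p % k := by omega
        exact hdist (a + q % k) (a + p % k) (by omega) (by omega) heq.symm
    set d := q - p with hd
    have hq : q = p + d := by omega
    have hdk : d < k := by omega
    have hthis : (p + d) % k = p % k := by rw [← hq, ← h1]
    rw [Nat.add_mod, Nat.mod_eq_of_lt hdk] at hthis
    rcases Nat.lt_or_ge (p % k + d) k with h | h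
    · rw [Nat.mod_eq_of_lt h] at hthis
      omega
    · rw [Nat.mod_eq_sub_mod h, Nat.mod_eq_of_lt (by omega : p % k + d - k < k)] at hthis
      omega
  -- max agent on the cycle
  obtain ⟨m0, hm0k, hmax⟩ := Finset.exists_max_image (Finset.range k)
    (fun m => (z m : Fin n).val) ⟨0, Finset.mem_range.mpr hk0⟩
  have hmax' : ∀ m : ℕ, (z m).val ≤ (z m0).val := by
    intro m
    rw [hzmod m]
    exact hmax _ (Finset.mem_range.mpr (Nat.mod_lt _ hk0))
  have hltall : ∀ r, z (m0 + 1 + r) ≠ z m0 → z (m0 + 1 + r) < z m0 := by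
    intro r hne
    exact lt_of_le_of_ne (hmax' _) (fun h => hne (Fin.val_injective (congrArg Fin.val h)))
  -- the fragment
  set g : ℕ → Fin n × ℕ := fun r => (z (m0 + 1 + r), c (z (m0 + 1 + r))) with hgdef
  set l : List (Fin n × ℕ) := (List.range (k - 1)).map g with hldef
  refine h2 (z m0) (c (z m0)) (hzB m0) ⟨l, ⟨?_, ?_, ?_, ?_⟩, ?_, ?_, ?_⟩
  · -- l ≠ []
    simp only [l, ne_eq, List.map_eq_nil_iff, List.range_eq_nil]
    omega
  · -- nodup
    rw [hldef, List.map_map]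
    apply List.Nodup.map_on _ List.nodup_range
    intro r hr r' hr' heq
    simp only [List.mem_range] at hr hr'
    simp only [Function.comp, g] at heq
    have heq' : z (m0 + 1 + r) = z (m0 + 1 + r') := heq
    rcases Nat.le_total r r' with h | h
    · have := hzinj (m0 + 1 + r) (m0 + 1 + r') (by omega) (by omega) heq'
      omega
    · have := hzinj (m0 + 1 + r') (m0 + 1 + r) (by omega) (by omega) heq'.symm
      omega
  · -- clocks below L
    intro p hp
    simp only [l, List.mem_map, List.mem_range] at hp
    obtain ⟨r, _, rfl⟩ := hp
    exact hzB _
  · -- chain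
    rw [hldef]
    show List.IsChain _ _
    rw [List.isChain_map, show k - 1 = (k - 2) + 1 by omega]
    rw [List.isChain_range_succ]
    intro r hr
    show P.loc (z (m0 + 1 + r)) (c (z (m0 + 1 + r)) + 1) = P.loc (z (m0 + 1 + (r + 1))) (c (z (m0 + 1 + (r + 1))))
    rw [show m0 + 1 + (r + 1) = (m0 + 1 + r) + 1 by omega]
    exact (hzchain (m0 + 1 + r)).symm
  · -- all agents smaller
    intro p hp
    simp only [l, List.mem_map, List.mem_range] at hp
    obtain ⟨r, hr, rfl⟩ := hp
    apply hltall
    intro hne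
    have := hzinj m0 (m0 + 1 + r) (by omega) (by omega) hne.symm
    omega
  · -- fragEnd
    have h5 := hzchain (m0 + k - 1)
    rw [show m0 + k - 1 + 1 = m0 + k by omega, hzper m0] at h5
    rw [hldef, OTI.fragEnd, show k - 1 = (k - 2) + 1 by omega, List.range_succ,
      List.map_append]
    simp only [List.map_cons, List.map_nil, List.getLast?_concat, Option.map_some]
    show some (P.loc (z (m0 + 1 + (k - 2))) (c (z (m0 + 1 + (k - 2))) + 1)) = _
    rw [show m0 + 1 + (k - 2) = m0 + k - 1 by omega]
    exact congrArg some h5.symm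
  · -- fragStart
    rw [hldef, OTI.fragStart, List.head?_map, show k - 1 = (k - 2) + 1 by omega,
      List.range_succ_eq_map]
    simp only [List.head?_cons, Option.map_some]
    show some (P.loc (z (m0 + 1 + 0)) (c (z (m0 + 1 + 0)))) = _
    rw [Nat.add_zero]
    exact congrArg some (hzchain m0)
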